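/- Let S and R be finite sets, N a real S×R matrix, c̄ ∈ ℝ^S strictly positive, k ∈ ℝ^R with nonnegative entries, and let A = −diag(c̄)⁻¹ · N · diag(k) · Nᵀ. Then for all i, o ∈ S and all t ≥ 0, |(e^{tA})_{oi}| ≤ √(c̄_i / c̄_o). (General upper bound on Sensitivity.) -/

import Mathlib

open Matrix NormedSpace

/-- Entries of `NormedSpace.exp (-P)` for a real positive semidefinite `P` are bounded by `1`. -/
lemma exp_neg_posSemidef_entry_le_one {n : Type*} [Fintype n] [DecidableEq n]
    (P : Matrix n n ℝ) (hP : P.PosSemidef) (o i : n) :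
    |NormedSpace.exp (-P) o i| ≤ 1 := by
  have hH : P.IsHermitian := hP.1
  set U : Matrix n n ℝ := (hH.eigenvectorUnitary : Matrix n n ℝ) with hU
  have hcoe : (RCLike.ofReal ∘ hH.eigenvalues : n → ℝ) = hH.eigenvalues := by
    ext j; simp
  have hspec : P = U * Matrix.diagonal hH.eigenvalues * star U := by
    have := hH.spectral_theorem
    rwa [hcoe] at this
  have hUstar : U * star U = 1 := Matrix.mem_unitaryGroup_iff.mp hH.eigenvectorUnitary.2
  have hstarU : star U * U = 1 := Matrix.mem_unitaryGroup_iff'.mp hH.eigenvectorUnitary.2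
  have hUinv : U⁻¹ = star U := Matrix.inv_eq_right_inv hUstar
  have hUunit : IsUnit U := ⟨⟨U, star U, hUstar, hstarU⟩, rfl⟩
  have hdneg : Matrix.diagonal (fun j => -hH.eigenvalues j)
      = -Matrix.diagonal hH.eigenvalues := by
    ext a b
    by_cases h : a = b <;> simp [Matrix.diagonal_apply, h]
  have hnegP : -P = U * Matrix.diagonal (fun j => -hH.eigenvalues j) * U⁻¹ := by
    rw [hUinv, hdneg, Matrix.mul_neg, Matrix.neg_mul]
    conv_lhs => rw [hspec]
  have hexpd : (NormedSpace.exp fun j => -hH.eigenvalues j) = fun j => Real.exp (-hH.eigenvalues j) := by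
    rw [Pi.exp_def]
    funext j
    exact (congr_fun Real.exp_eq_exp_ℝ _).symm
  have hexp : NormedSpace.exp (-P) = U * Matrix.diagonal (fun j => Real.exp (-hH.eigenvalues j)) * star U := by
    rw [hnegP, Matrix.exp_conj U _ hUunit, hUinv]
    congr 2
    rw [Matrix.exp_diagonal, hexpd]
  -- entrywise formula
  have hentry : NormedSpace.exp (-P) o i
      = ∑ j, U o j * Real.exp (-hH.eigenvalues j) * U i j := by
    rw [hexp, Matrix.mul_apply]
    congr 1
    ext j
    rw [Matrix.mul_diagonal]
    simp [Matrix.conjTranspose_apply, mul_assoc]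
  have hrow : ∀ s : n, ∑ j, U s j ^ 2 = 1 := by
    intro s
    have h1 : (U * star U) s s = (1 : Matrix n n ℝ) s s := by rw [hUstar]
    rw [Matrix.mul_apply] at h1
    simp only [Matrix.one_apply_eq] at h1
    rw [← h1]
    refine Finset.sum_congr rfl fun j _ => ?_
    simp [Matrix.conjTranspose_apply, pow_two]
  have habs : ∀ j, |U o j * Real.exp (-hH.eigenvalues j) * U i j|
      ≤ |U o j| * |U i j| := by
    intro j
    rw [abs_mul, abs_mul, abs_of_pos (Real.exp_pos _)]
    have hle : Real.exp (-hH.eigenvalues j) ≤ 1 := by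
      rw [Real.exp_le_one_iff]
      simpa using hP.eigenvalues_nonneg j
    calc |U o j| * Real.exp (-hH.eigenvalues j) * |U i j|
        ≤ |U o j| * 1 * |U i j| := by
          apply mul_le_mul_of_nonneg_right _ (abs_nonneg _)
          exact mul_le_mul_of_nonneg_left hle (abs_nonneg _)
      _ = |U o j| * |U i j| := by ring
  have hCS : ∑ j, |U o j| * |U i j| ≤ 1 := by
    have h2 := Finset.sum_mul_sq_le_sq_mul_sq Finset.univ (fun j => |U o j|) (fun j => |U i j|)
    simp only [sq_abs] at h2
    rw [hrow o, hrow i, mul_one] at h2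
    have hnn : 0 ≤ ∑ j, |U o j| * |U i j| :=
      Finset.sum_nonneg fun j _ => mul_nonneg (abs_nonneg _) (abs_nonneg _)
    nlinarith [h2, hnn]
  calc |NormedSpace.exp (-P) o i| = |∑ j, U o j * Real.exp (-hH.eigenvalues j) * U i j| := by rw [hentry]
    _ ≤ ∑ j, |U o j * Real.exp (-hH.eigenvalues j) * U i j| := Finset.abs_sum_le_sum_abs _ _
    _ ≤ ∑ j, |U o j| * |U i j| := Finset.sum_le_sum fun j _ => habs j
    _ ≤ 1 := hCS

/-- Theorem 4.1 (`th:upper-bound-sensitivity`): general upper bound on the Sensitivity. For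
`A = −diag(c̄)⁻¹ N diag(k) Nᵀ` with `c̄ > 0` and `k ≥ 0`, every entry of the matrix
exponential satisfies `|(e^{tA})_{oi}| ≤ √(c̄_i/c̄_o)` for `t ≥ 0`. -/
theorem sensitivity_upper_bound
    {S R : Type*} [Fintype S] [Fintype R] [DecidableEq S] [DecidableEq R]
    (N : Matrix S R ℝ) (cbar : S → ℝ) (k : R → ℝ)
    (hcbar : ∀ s, 0 < cbar s) (hk : ∀ r, 0 ≤ k r)
    (A : Matrix S S ℝ)
    (hA : A = -(Matrix.diagonal (fun s => (cbar s)⁻¹) * N * Matrix.diagonal k * Nᵀ)) :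
    ∀ (i o : S) (t : ℝ), 0 ≤ t →
      |NormedSpace.exp (t • A) o i| ≤ Real.sqrt (cbar i / cbar o) := by
  intro i o t ht
  set d : S → ℝ := fun s => Real.sqrt (cbar s) with hd_def
  have hd : ∀ s, 0 < d s := fun s => Real.sqrt_pos.mpr (hcbar s)
  set E : Matrix S S ℝ := Matrix.diagonal (fun s => (d s)⁻¹) with hE_def
  set D : Matrix S S ℝ := Matrix.diagonal d with hD_def
  have hED : E * D = 1 := by
    rw [hE_def, hD_def, Matrix.diagonal_mul_diagonal]
    have : (fun s => (d s)⁻¹ * d s) = fun _ => (1 : ℝ) := by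
      funext s; exact inv_mul_cancel₀ (hd s).ne'
    rw [this, Matrix.diagonal_one]
  have hDE : D * E = 1 := by
    rw [hE_def, hD_def, Matrix.diagonal_mul_diagonal]
    have : (fun s => d s * (d s)⁻¹) = fun _ => (1 : ℝ) := by
      funext s; exact mul_inv_cancel₀ (hd s).ne'
    rw [this, Matrix.diagonal_one]
  have hEE : E * E = Matrix.diagonal (fun s => (cbar s)⁻¹) := by
    rw [hE_def, Matrix.diagonal_mul_diagonal]
    have : (fun s => (d s)⁻¹ * (d s)⁻¹) = fun s => (cbar s)⁻¹ := by
      funext s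
      rw [← mul_inv, Real.mul_self_sqrt (hcbar s).le]
    rw [this]
  set sk : R → ℝ := fun r => Real.sqrt (k r) with hsk_def
  have hkk : Matrix.diagonal sk * Matrix.diagonal sk = Matrix.diagonal k := by
    rw [Matrix.diagonal_mul_diagonal]
    have : (fun r => sk r * sk r) = k := by
      funext r; exact Real.mul_self_sqrt (hk r)
    rw [this]
  set M : Matrix S R ℝ := Real.sqrt t • (E * N * Matrix.diagonal sk) with hM_def
  have htt : Real.sqrt t * Real.sqrt t = t := Real.mul_self_sqrt ht
  have hcore : (E * N * Matrix.diagonal sk) * (E * N * Matrix.diagonal sk)ᵀ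
      = E * (N * Matrix.diagonal k * Nᵀ) * E := by
    rw [Matrix.transpose_mul, Matrix.transpose_mul, Matrix.diagonal_transpose, hE_def,
      Matrix.diagonal_transpose, ← hE_def]
    simp only [Matrix.mul_assoc]
    rw [← Matrix.mul_assoc (Matrix.diagonal sk) (Matrix.diagonal sk), hkk]
  have hMMt : M * Mᵀ = t • (E * (N * Matrix.diagonal k * Nᵀ) * E) := by
    rw [hM_def, Matrix.transpose_smul, Matrix.smul_mul, Matrix.mul_smul, smul_smul, htt, hcore]
  have hconj : t • A = E * (-(M * Mᵀ)) * D := by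
    rw [hMMt, hA]
    have h1 : E * -(t • (E * (N * Matrix.diagonal k * Nᵀ) * E)) * D
        = -(t • (E * (E * (N * Matrix.diagonal k * Nᵀ) * E) * D)) := by
      simp [Matrix.mul_neg, Matrix.neg_mul, Matrix.mul_smul, Matrix.smul_mul]
    rw [h1, smul_neg]
    congr 2
    rw [← hEE]
    simp only [Matrix.mul_assoc]
    rw [hED, Matrix.mul_one]
  have hP : (M * Mᵀ).PosSemidef := by
    have := Matrix.posSemidef_self_mul_conjTranspose M
    rwa [Matrix.conjTranspose_eq_transpose_of_trivial] at this
  have hEunit : IsUnit E := ⟨⟨E, D, hED, hDE⟩, rfl⟩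
  have hEinv : E⁻¹ = D := Matrix.inv_eq_right_inv hED
  have hexp : NormedSpace.exp (t • A) = E * NormedSpace.exp (-(M * Mᵀ)) * D := by
    rw [hconj, ← hEinv, Matrix.exp_conj E _ hEunit, hEinv]
  have hentry : NormedSpace.exp (t • A) o i = (d o)⁻¹ * NormedSpace.exp (-(M * Mᵀ)) o i * d i := by
    rw [hexp, hE_def, hD_def, Matrix.mul_diagonal, Matrix.diagonal_mul]
  have hbound := exp_neg_posSemidef_entry_le_one (M * Mᵀ) hP o i
  rw [hentry]
  have habs : |(d o)⁻¹ * NormedSpace.exp (-(M * Mᵀ)) o i * d i|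
      = (d o)⁻¹ * |NormedSpace.exp (-(M * Mᵀ)) o i| * d i := by
    rw [abs_mul, abs_mul, abs_of_pos (hd i), abs_of_pos (inv_pos.mpr (hd o))]
  rw [habs]
  have hsqrt : Real.sqrt (cbar i / cbar o) = d i / d o := by
    rw [hd_def]
    exact Real.sqrt_div (hcbar i).le _
  rw [hsqrt]
  calc (d o)⁻¹ * |NormedSpace.exp (-(M * Mᵀ)) o i| * d i
      ≤ (d o)⁻¹ * 1 * d i := by
        apply mul_le_mul_of_nonneg_right _ (hd i).le
        exact mul_le_mul_of_nonneg_left hbound (inv_pos.mpr (hd o)).le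
    _ = d i / d o := by field_simp
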